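/- In U_q(sl_2), the element exp_{q²}(t e) conjugation/commutation with a vector-representation intertwiner component: if Φ_+, Φ_− are linear maps between U_q(sl_2)-modules forming the components of an intertwiner Φ : V⊗W → V' (W two-dimensional with e w_− = w_+, f w_+ = w_−, k w_± = q^{±1}w_±), so that x∘Φ_W = Φ_W∘Δ(x) for all x, then exp_{q²}(t e)∘Φ_+ = Φ_+∘exp_{q²}(t e) and exp_{q²}(t e)∘Φ_− = (t·Φ_+∘k^{-1} + Φ_−)∘exp_{q²}(t e), as identities of formal power series in t. -/

import Mathlib

open TensorProduct

/-- The `q`-integer `(n)_q`. -/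
def qInt {K : Type*} [Field K] (q : K) (n : ℕ) : K := ∑ i ∈ Finset.range n, q ^ i

/-- The `q`-factorial `(n)_q!`. -/
def qFact {K : Type*} [Field K] (q : K) (n : ℕ) : K := ∏ j ∈ Finset.range n, qInt q (j + 1)

/-- Commutation of `exp_{q²}(t e)` with the components `Φ₊, Φ₋` of a vector-representation
intertwiner `Φ : V ⊗ W → V'` of `U_q(sl_2)` (where `W` is the two-dimensional module
with `e w₋ = w₊`, `f w₊ = w₋`, `k w₊ = q w₊`, `k w₋ = q⁻¹ w₋`):
`exp_{q²}(te) ∘ Φ₊ = Φ₊ ∘ exp_{q²}(te)` and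
`exp_{q²}(te) ∘ Φ₋ = (t·Φ₊∘k⁻¹ + Φ₋) ∘ exp_{q²}(te)`,
as identities of formal power series in `t` with coefficients in `Hom(V, V')`. -/
theorem qExp_e_commutes_with_vertex_components
    {K : Type*} [Field K] {A : Type*} [Ring A] [Algebra K A]
    (q : K) (hq : ∀ n : ℕ, qFact (q ^ 2) n ≠ 0)
    (e f k kinv : A)
    (hk : k * kinv = 1) (hk' : kinv * k = 1)
    (hke : k * e = (q ^ 2) • (e * k))
    (hkf : k * f = (q ^ (-2 : ℤ)) • (f * k))
    (hef : e * f - f * e = (q - q⁻¹)⁻¹ • (k - kinv))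
    (Δ : A →ₐ[K] A ⊗[K] A)
    (hΔe : Δ e = e ⊗ₜ[K] 1 + kinv ⊗ₜ[K] e)
    (hΔf : Δ f = 1 ⊗ₜ[K] f + f ⊗ₜ[K] k)
    (hΔk : Δ k = k ⊗ₜ[K] k)
    {V V' : Type*} [AddCommGroup V] [Module K V] [AddCommGroup V'] [Module K V']
    (ρ : A →ₐ[K] Module.End K V) (ρ' : A →ₐ[K] Module.End K V')
    -- the two-dimensional module `W = K w₊ ⊕ K w₋`, realized as `K × K`
    (ρW : A →ₐ[K] Module.End K (K × K))
    (hρWe : ρW e = (LinearMap.snd K K K).prod 0)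
    (hρWf : ρW f = (0 : K × K →ₗ[K] K).prod (LinearMap.fst K K K))
    (hρWk : ρW k = (q • LinearMap.fst K K K).prod (q⁻¹ • LinearMap.snd K K K))
    -- the intertwiner `Φ : V ⊗ W → V'`, satisfying `x ∘ Φ = Φ ∘ Δ(x)`
    (Φ : V ⊗[K] (K × K) →ₗ[K] V')
    (hΦ : ∀ (x : A) (t : V ⊗[K] (K × K)),
      ρ' x (Φ t) =
        Φ ((Module.endTensorEndAlgHom.comp (Algebra.TensorProduct.map ρ ρW)) (Δ x) t))
    -- the components `Φ₊, Φ₋` of `Φ`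
    (Φp Φm : V →ₗ[K] V')
    (hΦp : ∀ v : V, Φp v = Φ (v ⊗ₜ[K] ((1 : K), (0 : K))))
    (hΦm : ∀ v : V, Φm v = Φ (v ⊗ₜ[K] ((0 : K), (1 : K)))) :
    (PowerSeries.mk fun n => (qFact (q ^ 2) n)⁻¹ • ((ρ' e ^ n) ∘ₗ Φp)) =
      (PowerSeries.mk fun n => (qFact (q ^ 2) n)⁻¹ • (Φp ∘ₗ (ρ e ^ n))) ∧
    (PowerSeries.mk fun n => (qFact (q ^ 2) n)⁻¹ • ((ρ' e ^ n) ∘ₗ Φm)) =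
      (PowerSeries.mk fun n =>
        (qFact (q ^ 2) n)⁻¹ • (Φm ∘ₗ (ρ e ^ n)) +
          match n with
          | 0 => 0
          | Nat.succ m =>
              (qFact (q ^ 2) m)⁻¹ • ((Φp ∘ₗ (ρ kinv)) ∘ₗ (ρ e ^ m))) := by
  -- component identities from the intertwining property
  have h1 : ρ' e ∘ₗ Φp = Φp ∘ₗ ρ e := by
    ext v
    simp only [LinearMap.comp_apply]
    rw [hΦp, hΦ e, hΔe]
    simp [Module.endTensorEndAlgHom_apply, hρWe, hΦp, Prod.mk_zero_zero]
  have h2 : ρ' e ∘ₗ Φm = Φm ∘ₗ ρ e + Φp ∘ₗ ρ kinv := by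
    ext v
    simp only [LinearMap.comp_apply, LinearMap.add_apply]
    rw [hΦm, hΦ e, hΔe]
    simp [Module.endTensorEndAlgHom_apply, hρWe, hΦp, hΦm]
  -- `e * kinv = q² • (kinv * e)`
  have hek : e * kinv = (q ^ 2) • (kinv * e) := by
    calc e * kinv = kinv * (k * e) * kinv := by rw [← mul_assoc, hk', one_mul]
    _ = kinv * ((q ^ 2) • (e * k)) * kinv := by rw [hke]
    _ = (q ^ 2) • (kinv * e) := by
        simp only [mul_smul_comm, smul_mul_assoc]
        rw [mul_assoc, mul_assoc, hk, mul_one]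
  have h3 : ρ e ∘ₗ ρ kinv = (q ^ 2) • (ρ kinv ∘ₗ ρ e) := by
    have := congrArg ρ hek
    simpa [map_mul, map_smul, Module.End.mul_eq_comp] using this
  -- first induction : `(ρ' e)ⁿ ∘ Φ₊ = Φ₊ ∘ (ρ e)ⁿ`
  have L1 : ∀ n : ℕ, (ρ' e ^ n) ∘ₗ Φp = Φp ∘ₗ (ρ e ^ n) := by
    intro n
    induction n with
    | zero => rfl
    | succ n ih =>
        rw [pow_succ', pow_succ', Module.End.mul_eq_comp, Module.End.mul_eq_comp,
          LinearMap.comp_assoc, ih, ← LinearMap.comp_assoc, h1, LinearMap.comp_assoc]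
  -- auxiliary commutation
  have L3 : ∀ n : ℕ, ρ' e ∘ₗ ((Φp ∘ₗ ρ kinv) ∘ₗ (ρ e ^ n)) =
      (q ^ 2) • ((Φp ∘ₗ ρ kinv) ∘ₗ (ρ e ^ (n + 1))) := by
    intro n
    ext v
    have a1 := LinearMap.congr_fun h1 (ρ kinv ((ρ e ^ n) v))
    have a3 := LinearMap.congr_fun h3 ((ρ e ^ n) v)
    simp only [LinearMap.comp_apply, LinearMap.smul_apply] at a1 a3 ⊢
    rw [a1, a3, pow_succ' (ρ e) n, Module.End.mul_apply, map_smul]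
  -- second induction
  have hint : ∀ m : ℕ, qInt (q ^ 2) (m + 1) = 1 + q ^ 2 * qInt (q ^ 2) m := by
    intro m
    rw [qInt, Finset.sum_range_succ']
    simp [qInt, Finset.mul_sum, pow_succ', add_comm]
  have L2 : ∀ n : ℕ, (ρ' e ^ (n + 1)) ∘ₗ Φm =
      Φm ∘ₗ (ρ e ^ (n + 1)) + qInt (q ^ 2) (n + 1) • ((Φp ∘ₗ ρ kinv) ∘ₗ (ρ e ^ n)) := by
    intro n
    induction n with
    | zero =>
        rw [zero_add, pow_one, pow_one, pow_zero, h2, hint 0]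
        simp [qInt, Module.End.one_eq_id, LinearMap.comp_id]
    | succ n ih =>
        rw [pow_succ' (ρ' e) (n + 1), Module.End.mul_eq_comp, LinearMap.comp_assoc, ih,
          LinearMap.comp_add, LinearMap.comp_smul, L3, ← LinearMap.comp_assoc, h2,
          LinearMap.add_comp, hint (n + 1), add_smul, one_smul, mul_smul]
        have e1 : (Φm ∘ₗ ρ e) ∘ₗ (ρ e ^ (n + 1)) = Φm ∘ₗ (ρ e ^ (n + 1 + 1)) := by
          rw [LinearMap.comp_assoc, ← Module.End.mul_eq_comp, ← pow_succ']
        rw [e1]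
        module
  -- factorial recursion
  have hfact : ∀ n : ℕ, (qFact (q ^ 2) (n + 1))⁻¹ * qInt (q ^ 2) (n + 1) = (qFact (q ^ 2) n)⁻¹ := by
    intro n
    have hrec : qFact (q ^ 2) (n + 1) = qFact (q ^ 2) n * qInt (q ^ 2) (n + 1) := by
      simp [qFact, Finset.prod_range_succ]
    have hI : qInt (q ^ 2) (n + 1) ≠ 0 := by
      intro h
      exact hq (n + 1) (by rw [hrec, h, mul_zero])
    rw [hrec, mul_inv, mul_assoc, inv_mul_cancel₀ hI, mul_one]
  constructor
  · exact congrArg PowerSeries.mk (funext fun n => by rw [L1 n])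
  · refine congrArg PowerSeries.mk (funext fun n => ?_)
    cases n with
    | zero => simp [pow_zero, Module.End.one_eq_id, LinearMap.comp_id, LinearMap.id_comp]
    | succ n =>
        show (qFact (q ^ 2) (n + 1))⁻¹ • ((ρ' e ^ (n + 1)) ∘ₗ Φm) =
          (qFact (q ^ 2) (n + 1))⁻¹ • (Φm ∘ₗ (ρ e ^ (n + 1))) +
            (qFact (q ^ 2) n)⁻¹ • ((Φp ∘ₗ ρ kinv) ∘ₗ (ρ e ^ n))
        rw [L2 n, smul_add, smul_smul, hfact n]
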